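/- In the ODE flow setting, let ν₀ be a Borel probability measure on ℝ^d with finite second moment (the distribution of initial conditions) and let μ, μ̂ be Borel probability measures on ℝ^ℓ with finite second moments (the true and approximate parameter distributions). For δ > 0 and x₀ in the topological support of ν₀ (so that ν₀ of the closed ball B̄(x₀, δ) is positive), let ν_{x₀,δ}(t) denote the pushforward under (x, θ) ↦ X(t; θ, x) of the product of the normalized restriction of ν₀ to B̄(x₀, δ) with μ, and let ν̂_{x₀,δ}(t) denote the analogous measure with μ̂ in place of μ. Then there exist constants C₀, C₁ > 0 depending only on the Lipschitz constant C such that for every x₀ in the support of ν₀, every δ > 0, and every t ∈ [0,T]: W₂(ν_{x₀,δ}(t), ν̂_{x₀,δ}(t)) ≤ 2δ e^{C₀ t/2} + (C₁ t e^{C₀ t})^{1/2} · W₂(μ, μ̂); consequently W₂²(ν_{x₀,δ}(t), ν̂_{x₀,δ}(t)) ≤ 8δ² e^{C₀ t} + 2 C₁ t e^{C₀ t} · W₂²(μ, μ̂). (This is the population-level, ODE specialization of Theorem 2.2: the local time-decoupled squared Wasserstein-2 distance between the conditioned solution laws is bounded by a δ² term plus a multiple of W₂²(μ, μ̂), so matching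 the parameter distributions forces the loss to be small.) -/

import Mathlib

open MeasureTheory Set

/-- The squared Wasserstein-2 distance between two Borel measures. -/
noncomputable def W2sq {E : Type*} [MeasurableSpace E] [NormedAddCommGroup E]
    (μ ν : Measure E) : ℝ :=
  sInf {r : ℝ | ∃ π : Measure (E × E), IsProbabilityMeasure π ∧
    π.map Prod.fst = μ ∧ π.map Prod.snd = ν ∧ r = ∫ p, ‖p.1 - p.2‖ ^ 2 ∂π}

/-- The Wasserstein-2 distance. -/
noncomputable def W2 {E : Type*} [MeasurableSpace E] [NormedAddCommGroup E]
    (μ ν : Measure E) : ℝ :=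
  Real.sqrt (W2sq μ ν)

/-- The law at time `t` of the ODE solution with initial condition distributed according
to the normalized restriction of `ν₀` to the closed ball `B̄(x₀, δ)` and parameter
distributed according to `μ` (independently). -/
noncomputable def condLaw {d l : ℕ}
    (X : ℝ → EuclideanSpace ℝ (Fin l) → EuclideanSpace ℝ (Fin d) → EuclideanSpace ℝ (Fin d))
    (ν₀ : Measure (EuclideanSpace ℝ (Fin d))) (μ : Measure (EuclideanSpace ℝ (Fin l)))
    (x₀ : EuclideanSpace ℝ (Fin d)) (δ : ℝ) (t : ℝ) :
    Measure (EuclideanSpace ℝ (Fin d)) :=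
  ((((ν₀ (Metric.closedBall x₀ δ))⁻¹ • ν₀.restrict (Metric.closedBall x₀ δ)).prod μ).map
    fun p => X t p.2 p.1)

lemma eucl_norm_le_sum_abs {n : ℕ} (v : EuclideanSpace ℝ (Fin n)) : ‖v‖ ≤ ∑ i, |v i| := by
  rw [EuclideanSpace.norm_eq]
  have h : ∑ i, ‖v i‖ ^ 2 ≤ (∑ i, ‖v i‖) ^ 2 :=
    Finset.sum_sq_le_sq_sum_of_nonneg fun _ _ => norm_nonneg _
  calc Real.sqrt (∑ i, ‖v i‖ ^ 2) ≤ Real.sqrt ((∑ i, ‖v i‖) ^ 2) := Real.sqrt_le_sqrt h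
    _ = ∑ i, ‖v i‖ := Real.sqrt_sq (Finset.sum_nonneg fun _ _ => norm_nonneg _)
    _ = ∑ i, |v i| := by simp [Real.norm_eq_abs]

lemma flow_param_est {d l : ℕ} (C T : ℝ) (hC : 0 < C)
    (f : EuclideanSpace ℝ (Fin d) → ℝ → EuclideanSpace ℝ (Fin l) → EuclideanSpace ℝ (Fin d))
    (hLip : ∀ (x xhat : EuclideanSpace ℝ (Fin d)) (θ θhat : EuclideanSpace ℝ (Fin l)),
      ∀ t ∈ Icc (0 : ℝ) T,
      ∑ i, |f x t θ i - f xhat t θhat i| ≤ C * (‖x - xhat‖ + ‖θ - θhat‖))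
    (X : ℝ → EuclideanSpace ℝ (Fin l) → EuclideanSpace ℝ (Fin d) → EuclideanSpace ℝ (Fin d))
    (hX0 : ∀ θ x₀, X 0 θ x₀ = x₀)
    (hXode : ∀ θ x₀, ∀ t ∈ Icc (0 : ℝ) T,
      HasDerivWithinAt (fun s => X s θ x₀) (f (X t θ x₀) t θ) (Icc 0 T) t)
    (θ θ' : EuclideanSpace ℝ (Fin l)) (x : EuclideanSpace ℝ (Fin d)) :
    ∀ t ∈ Icc (0:ℝ) T, ‖X t θ x - X t θ' x‖ ≤ ‖θ - θ'‖ * (Real.exp (C * t) - 1) := by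
  set g : ℝ → EuclideanSpace ℝ (Fin d) := fun s => X s θ x - X s θ' x with hg
  set g' : ℝ → EuclideanSpace ℝ (Fin d) := fun s => f (X s θ x) s θ - f (X s θ' x) s θ' with hg'
  have hderiv : ∀ s ∈ Icc (0:ℝ) T, HasDerivWithinAt g (g' s) (Icc 0 T) s :=
    fun s hs => (hXode θ x s hs).sub (hXode θ' x s hs)
  have hcont : ContinuousOn g (Icc 0 T) := fun s hs => (hderiv s hs).continuousWithinAt
  have hderiv' : ∀ s ∈ Ico (0:ℝ) T, HasDerivWithinAt g (g' s) (Ici s) s := by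
    intro s hs
    refine (hderiv s (Ico_subset_Icc_self hs)).mono_of_mem_nhdsWithin ?_
    have h1 : Ici s ∩ Iio T ∈ nhdsWithin s (Ici s) :=
      inter_mem_nhdsWithin _ (Iio_mem_nhds hs.2)
    refine Filter.mem_of_superset h1 ?_
    rintro u ⟨hu1, hu2⟩
    exact ⟨le_trans hs.1 hu1, le_of_lt hu2⟩
  have hbound : ∀ s ∈ Ico (0:ℝ) T, ‖g' s‖ ≤ C * ‖g s‖ + C * ‖θ - θ'‖ := by
    intro s hs
    have h1 : ‖g' s‖ ≤ ∑ i, |f (X s θ x) s θ i - f (X s θ' x) s θ' i| := by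
      have := eucl_norm_le_sum_abs (g' s)
      simpa [hg', PiLp.sub_apply] using this
    refine h1.trans ?_
    have h2 := hLip (X s θ x) (X s θ' x) θ θ' s (Ico_subset_Icc_self hs)
    calc ∑ i, |f (X s θ x) s θ i - f (X s θ' x) s θ' i|
        ≤ C * (‖X s θ x - X s θ' x‖ + ‖θ - θ'‖) := h2
      _ = C * ‖g s‖ + C * ‖θ - θ'‖ := by rw [hg]; ring
  have h0 : ‖g 0‖ ≤ 0 := by simp [hg, hX0]
  intro t ht
  have key := norm_le_gronwallBound_of_norm_deriv_right_le hcont hderiv' h0 hbound t ht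
  rw [gronwallBound_of_K_ne_0 (ne_of_gt hC)] at key
  simp only [sub_zero, zero_mul, zero_add] at key
  calc ‖X t θ x - X t θ' x‖ = ‖g t‖ := rfl
    _ ≤ C * ‖θ - θ'‖ / C * (Real.exp (C * t) - 1) := key
    _ = ‖θ - θ'‖ * (Real.exp (C * t) - 1) := by field_simp

lemma W2sq_bddBelow {E : Type*} [MeasurableSpace E] [NormedAddCommGroup E]
    (μ ν : Measure E) : ∀ r ∈ {r : ℝ | ∃ π : Measure (E × E), IsProbabilityMeasure π ∧
    π.map Prod.fst = μ ∧ π.map Prod.snd = ν ∧ r = ∫ p, ‖p.1 - p.2‖ ^ 2 ∂π}, (0:ℝ) ≤ r := by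
  rintro r ⟨π, _, _, _, rfl⟩
  exact integral_nonneg fun p => by positivity

lemma W2sq_le {E : Type*} [MeasurableSpace E] [NormedAddCommGroup E] {μ ν : Measure E}
    (π : Measure (E × E)) (h : IsProbabilityMeasure π) (h1 : π.map Prod.fst = μ)
    (h2 : π.map Prod.snd = ν) : W2sq μ ν ≤ ∫ p, ‖p.1 - p.2‖ ^ 2 ∂π :=
  csInf_le ⟨0, W2sq_bddBelow μ ν⟩ ⟨π, h, h1, h2, rfl⟩

lemma W2sq_nonneg {E : Type*} [MeasurableSpace E] [NormedAddCommGroup E]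
    {μ ν : Measure E} [IsProbabilityMeasure μ] [IsProbabilityMeasure ν] :
    0 ≤ W2sq μ ν := by
  refine le_csInf ⟨∫ p, ‖p.1 - p.2‖ ^ 2 ∂(μ.prod ν), μ.prod ν, inferInstance, ?_, ?_, rfl⟩
    (W2sq_bddBelow μ ν)
  · simp
  · simp

section Main
variable {d l : ℕ}
local notation "Ed" => EuclideanSpace ℝ (Fin d)
local notation "El" => EuclideanSpace ℝ (Fin l)

/-- key step: near-optimal parameter coupling transported through the flow -/
lemma key_coupling_bound (t : ℝ) (K : ℝ) (hK0 : 0 ≤ K)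
    (X : ℝ → El → Ed → Ed)
    (hXt : Continuous (fun p : El × Ed => X t p.1 p.2))
    (ρ : Measure Ed) (hρ : IsProbabilityMeasure ρ)
    (μ μhat : Measure El)
    (hμ : IsProbabilityMeasure μ) (hμhat : IsProbabilityMeasure μhat)
    (hμmom : Integrable (fun θ : El => ‖θ‖ ^ 2) μ)
    (hμhatmom : Integrable (fun θ : El => ‖θ‖ ^ 2) μhat)
    (hpt : ∀ (θ θ' : El) (x : Ed), ‖X t θ x - X t θ' x‖ ^ 2 ≤ K * ‖θ - θ'‖ ^ 2) :
    W2sq ((ρ.prod μ).map fun p => X t p.2 p.1)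
        ((ρ.prod μhat).map fun p => X t p.2 p.1) ≤ K * W2sq μ μhat := by
  haveI := hρ; haveI := hμ; haveI := hμhat
  set S := {r : ℝ | ∃ π : Measure (El × El), IsProbabilityMeasure π ∧
    π.map Prod.fst = μ ∧ π.map Prod.snd = μhat ∧ r = ∫ p, ‖p.1 - p.2‖ ^ 2 ∂π} with hS
  have hSne : S.Nonempty := by
    refine ⟨∫ p, ‖p.1 - p.2‖ ^ 2 ∂(μ.prod μhat), μ.prod μhat, inferInstance, ?_, ?_, rfl⟩ <;> simp
  have hw : W2sq μ μhat = sInf S := rfl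
  set w := W2sq μ μhat with hwdef
  have hwnn : 0 ≤ w := W2sq_nonneg
  refine le_of_forall_pos_le_add fun ε hε => ?_
  have hε' : 0 < ε / (K + 1) := by positivity
  obtain ⟨r, hrS, hrlt⟩ : ∃ r ∈ S, r < w + ε / (K + 1) := by
    apply exists_lt_of_csInf_lt hSne
    rw [← hw]; linarith
  obtain ⟨πθ, hπθ, hπ1, hπ2, hr⟩ := hrS
  haveI := hπθ
  -- the transport map
  set G : Ed × (El × El) → Ed × Ed :=
    fun q => (X t q.2.1 q.1, X t q.2.2 q.1) with hGdef
  have hG : Continuous G :=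
    (hXt.comp ((continuous_fst.comp continuous_snd).prodMk continuous_fst)).prodMk
      (hXt.comp ((continuous_snd.comp continuous_snd).prodMk continuous_fst))
  set σ := ρ.prod πθ with hσdef
  haveI : IsProbabilityMeasure σ := by infer_instance
  have hsnd : σ.map Prod.snd = πθ := by
    rw [hσdef, Measure.map_snd_prod, measure_univ, one_smul]
  -- the coupling
  set π := σ.map G with hπdef
  haveI hπprob : IsProbabilityMeasure π := Measure.isProbabilityMeasure_map hG.measurable.aemeasurable
  have hXmeas : Measurable (fun p : Ed × El => X t p.2 p.1) :=
    (hXt.comp (continuous_snd.prodMk continuous_fst)).measurable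
  have hmarg : ∀ (m : Measure El) (proj : El × El → El), IsProbabilityMeasure m →
      Measurable proj → πθ.map proj = m →
      σ.map (fun q : Ed × (El × El) => X t (proj q.2) q.1) =
        (ρ.prod m).map (fun p => X t p.2 p.1) := by
    intro m proj hm hproj hmap
    have h1 : (ρ.prod m) = σ.map (Prod.map id proj) := by
      rw [← hmap, ← Measure.map_id (μ := ρ), Measure.map_prod_map _ _ measurable_id hproj]
    rw [h1, Measure.map_map hXmeas (measurable_id.prodMap hproj)]
    rfl
  have hfst : π.map Prod.fst = (ρ.prod μ).map fun p => X t p.2 p.1 := by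
    rw [hπdef, Measure.map_map measurable_fst hG.measurable]
    exact hmarg μ Prod.fst hμ measurable_fst hπ1
  have hsndm : π.map Prod.snd = (ρ.prod μhat).map fun p => X t p.2 p.1 := by
    rw [hπdef, Measure.map_map measurable_snd hG.measurable]
    exact hmarg μhat Prod.snd hμhat measurable_snd hπ2
  -- cost computation
  have hcost_cont : Continuous (fun p : Ed × Ed => ‖p.1 - p.2‖ ^ 2) := by fun_prop
  have hcostθ_cont : Continuous (fun p : El × El => ‖p.1 - p.2‖ ^ 2) := by fun_prop
  have hcost : ∫ p, ‖p.1 - p.2‖ ^ 2 ∂π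
      = ∫ q, ‖X t q.2.1 q.1 - X t q.2.2 q.1‖ ^ 2 ∂σ := by
    rw [hπdef, integral_map hG.measurable.aemeasurable hcost_cont.aestronglyMeasurable]
  -- integrability of the dominating function
  have iθ : Integrable (fun p : El × El => ‖p.1 - p.2‖ ^ 2) πθ := by
    have i1 : Integrable (fun p : El × El => ‖p.1‖ ^ 2) πθ := by
      have := (integrable_map_measure
        (Continuous.aestronglyMeasurable (by fun_prop : Continuous (fun θ : El => ‖θ‖ ^ 2)))
        measurable_fst.aemeasurable).1 (hπ1 ▸ hμmom)
      exact this
    have i2 : Integrable (fun p : El × El => ‖p.2‖ ^ 2) πθ := by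
      have := (integrable_map_measure
        (Continuous.aestronglyMeasurable (by fun_prop : Continuous (fun θ : El => ‖θ‖ ^ 2)))
        measurable_snd.aemeasurable).1 (hπ2 ▸ hμhatmom)
      exact this
    refine Integrable.mono' ((i1.const_mul 2).add (i2.const_mul 2))
      hcostθ_cont.aestronglyMeasurable (Filter.Eventually.of_forall fun p => ?_)
    have h1 := norm_sub_le p.1 p.2
    have hsq : ‖p.1 - p.2‖ ^ 2 ≤ (‖p.1‖ + ‖p.2‖) ^ 2 := pow_le_pow_left₀ (norm_nonneg _) h1 2
    have h2 : ‖p.1 - p.2‖ ^ 2 ≤ 2 * ‖p.1‖ ^ 2 + 2 * ‖p.2‖ ^ 2 := by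
      nlinarith [sq_nonneg (‖p.1‖ - ‖p.2‖)]
    simpa [abs_of_nonneg (by positivity : (0:ℝ) ≤ ‖p.1 - p.2‖ ^ 2)] using h2
  have idom : Integrable (fun q : Ed × (El × El) => K * ‖q.2.1 - q.2.2‖ ^ 2) σ := by
    have : Integrable (fun p : El × El => ‖p.1 - p.2‖ ^ 2) (σ.map Prod.snd) := hsnd ▸ iθ
    have h2 := (integrable_map_measure hcostθ_cont.aestronglyMeasurable
      measurable_snd.aemeasurable).1 this
    exact h2.const_mul K
  have hmono : ∫ q, ‖X t q.2.1 q.1 - X t q.2.2 q.1‖ ^ 2 ∂σ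
      ≤ ∫ q, K * ‖q.2.1 - q.2.2‖ ^ 2 ∂σ := by
    refine integral_mono_of_nonneg (Filter.Eventually.of_forall fun q => by positivity) idom
      (Filter.Eventually.of_forall fun q => hpt _ _ _)
  have heq2 : ∫ q, K * ‖q.2.1 - q.2.2‖ ^ 2 ∂σ = K * r := by
    rw [integral_const_mul, hr]
    congr 1
    rw [← hsnd, integral_map measurable_snd.aemeasurable hcostθ_cont.aestronglyMeasurable]
  have hKmul : K * r ≤ K * w + ε := by
    have h1 : K * r ≤ K * (w + ε / (K + 1)) := mul_le_mul_of_nonneg_left hrlt.le hK0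
    have h2 : K * (ε / (K + 1)) ≤ ε := by
      rw [mul_div_assoc']
      rw [div_le_iff₀ (by positivity)]
      nlinarith
    nlinarith
  calc W2sq ((ρ.prod μ).map fun p => X t p.2 p.1) ((ρ.prod μhat).map fun p => X t p.2 p.1)
      ≤ ∫ p, ‖p.1 - p.2‖ ^ 2 ∂π := W2sq_le π hπprob hfst hsndm
    _ = ∫ q, ‖X t q.2.1 q.1 - X t q.2.2 q.1‖ ^ 2 ∂σ := hcost
    _ ≤ ∫ q, K * ‖q.2.1 - q.2.2‖ ^ 2 ∂σ := hmono
    _ = K * r := heq2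
    _ ≤ K * w + ε := hKmul

end Main

/-- population-level ODE specialization of Theorem 2.2: the local
time-decoupled `W₂` distance between the conditioned solution laws obtained from the true
and the approximate parameter distributions `μ, μ̂` is bounded by a `δ` term plus a
multiple of `W₂(μ, μ̂)`; squaring, `W₂² ≤ 8δ²e^{C₀t} + 2C₁te^{C₀t}·W₂²(μ, μ̂)`. -/
theorem ode_local_time_decoupled_W2_parameter_bound
    {d l : ℕ} (C T : ℝ) (hC : 0 < C) (hT : 0 < T)
    (f : EuclideanSpace ℝ (Fin d) → ℝ → EuclideanSpace ℝ (Fin l) → EuclideanSpace ℝ (Fin d))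
    (hf_cont : ContinuousOn
      (fun p : EuclideanSpace ℝ (Fin d) × ℝ × EuclideanSpace ℝ (Fin l) => f p.1 p.2.1 p.2.2)
      (univ ×ˢ Icc 0 T ×ˢ univ))
    (hLip : ∀ (x xhat : EuclideanSpace ℝ (Fin d)) (θ θhat : EuclideanSpace ℝ (Fin l)),
      ∀ t ∈ Icc (0 : ℝ) T,
      ∑ i, |f x t θ i - f xhat t θhat i| ≤ C * (‖x - xhat‖ + ‖θ - θhat‖))
    (hM₀ : ∃ M₀ : ℝ, ∀ t ∈ Icc (0 : ℝ) T, ∑ i, |f 0 t 0 i| ≤ M₀)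
    (X : ℝ → EuclideanSpace ℝ (Fin l) → EuclideanSpace ℝ (Fin d) → EuclideanSpace ℝ (Fin d))
    (hX0 : ∀ θ x₀, X 0 θ x₀ = x₀)
    (hXode : ∀ θ x₀, ∀ t ∈ Icc (0 : ℝ) T,
      HasDerivWithinAt (fun s => X s θ x₀) (f (X t θ x₀) t θ) (Icc 0 T) t)
    (hXcont : ContinuousOn
      (fun p : ℝ × EuclideanSpace ℝ (Fin l) × EuclideanSpace ℝ (Fin d) => X p.1 p.2.1 p.2.2)
      (Icc 0 T ×ˢ univ ×ˢ univ))
    (ν₀ : Measure (EuclideanSpace ℝ (Fin d))) (hν₀ : IsProbabilityMeasure ν₀)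
    (hν₀mom : Integrable (fun x => ‖x‖ ^ 2) ν₀)
    (μ μhat : Measure (EuclideanSpace ℝ (Fin l)))
    (hμ : IsProbabilityMeasure μ) (hμhat : IsProbabilityMeasure μhat)
    (hμmom : Integrable (fun θ => ‖θ‖ ^ 2) μ)
    (hμhatmom : Integrable (fun θ => ‖θ‖ ^ 2) μhat) :
    ∃ C₀ > (0 : ℝ), ∃ C₁ > (0 : ℝ),
      ∀ (x₀ : EuclideanSpace ℝ (Fin d)) (δ : ℝ), 0 < δ →
        ν₀ (Metric.closedBall x₀ δ) ≠ 0 →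
        ∀ t ∈ Icc (0 : ℝ) T,
          W2 (condLaw X ν₀ μ x₀ δ t) (condLaw X ν₀ μhat x₀ δ t) ≤
              2 * δ * Real.exp (C₀ * t / 2) +
                Real.sqrt (C₁ * t * Real.exp (C₀ * t)) * W2 μ μhat ∧
          W2sq (condLaw X ν₀ μ x₀ δ t) (condLaw X ν₀ μhat x₀ δ t) ≤
              8 * δ ^ 2 * Real.exp (C₀ * t) +
                2 * C₁ * t * Real.exp (C₀ * t) * W2sq μ μhat := by
  haveI := hν₀; haveI := hμ; haveI := hμhat
  refine ⟨2 * C, by positivity, C ^ 2 * T, by positivity, ?_⟩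
  intro x₀ δ hδ hB t ht
  set B := Metric.closedBall x₀ δ with hBdef
  set ρ := (ν₀ B)⁻¹ • ν₀.restrict B with hρdef
  haveI hρ : IsProbabilityMeasure ρ := by
    constructor
    rw [hρdef, Measure.smul_apply, Measure.restrict_apply_univ, smul_eq_mul]
    exact ENNReal.inv_mul_cancel hB (measure_ne_top ν₀ B)
  -- continuity of the time-t flow map
  have hXt : Continuous (fun p : EuclideanSpace ℝ (Fin l) × EuclideanSpace ℝ (Fin d) =>
      X t p.1 p.2) := by
    rw [← continuousOn_univ]
    refine hXcont.comp (Continuous.continuousOn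
      (continuous_const.prodMk (continuous_fst.prodMk continuous_snd))) ?_
    intro p _
    exact ⟨ht, trivial, trivial⟩
  set K := C ^ 2 * T * t * Real.exp (2 * C * t) with hKdef
  have ht0 : 0 ≤ t := ht.1
  have hK0 : 0 ≤ K := by positivity
  -- pointwise Gronwall estimate, squared
  have hexp : Real.exp (C * t) - 1 ≤ C * t * Real.exp (C * t) := by
    have h1 : 1 - C * t ≤ Real.exp (-(C * t)) := by
      have := Real.add_one_le_exp (-(C * t)); linarith
    have h2 : (1 - C * t) * Real.exp (C * t) ≤ Real.exp (-(C * t)) * Real.exp (C * t) :=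
      mul_le_mul_of_nonneg_right h1 (Real.exp_pos _).le
    rw [← Real.exp_add, neg_add_cancel, Real.exp_zero] at h2
    nlinarith
  have hfac : (Real.exp (C * t) - 1) ^ 2 ≤ K := by
    have hnn : 0 ≤ Real.exp (C * t) - 1 := by
      have : (1:ℝ) ≤ Real.exp (C * t) := Real.one_le_exp (by positivity)
      linarith
    have h1 : (Real.exp (C * t) - 1) ^ 2 ≤ (C * t * Real.exp (C * t)) ^ 2 :=
      pow_le_pow_left₀ hnn hexp 2
    have h2 : (C * t * Real.exp (C * t)) ^ 2 = C ^ 2 * t ^ 2 * Real.exp (2 * C * t) := by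
      rw [mul_pow, mul_pow, ← Real.exp_nat_mul]
      ring_nf
    have h3 : C ^ 2 * t ^ 2 * Real.exp (2 * C * t) ≤ K := by
      rw [hKdef]
      have h5 : t ^ 2 ≤ T * t := by nlinarith [ht.2]
      have h4 : C ^ 2 * Real.exp (2 * C * t) * t ^ 2
          ≤ C ^ 2 * Real.exp (2 * C * t) * (T * t) :=
        mul_le_mul_of_nonneg_left h5 (by positivity)
      nlinarith [h4]
    linarith
  have hpt : ∀ (θ θ' : EuclideanSpace ℝ (Fin l)) (x : EuclideanSpace ℝ (Fin d)),
      ‖X t θ x - X t θ' x‖ ^ 2 ≤ K * ‖θ - θ'‖ ^ 2 := by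
    intro θ θ' x
    have h1 := flow_param_est C T hC f hLip X hX0 hXode θ θ' x t ht
    have h2 : ‖X t θ x - X t θ' x‖ ^ 2 ≤ (‖θ - θ'‖ * (Real.exp (C * t) - 1)) ^ 2 :=
      pow_le_pow_left₀ (norm_nonneg _) h1 2
    calc ‖X t θ x - X t θ' x‖ ^ 2 ≤ (‖θ - θ'‖ * (Real.exp (C * t) - 1)) ^ 2 := h2
      _ = (Real.exp (C * t) - 1) ^ 2 * ‖θ - θ'‖ ^ 2 := by ring
      _ ≤ K * ‖θ - θ'‖ ^ 2 := mul_le_mul_of_nonneg_right hfac (sq_nonneg _)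
  have hmain : W2sq (condLaw X ν₀ μ x₀ δ t) (condLaw X ν₀ μhat x₀ δ t) ≤ K * W2sq μ μhat := by
    have : condLaw X ν₀ μ x₀ δ t = (ρ.prod μ).map fun p => X t p.2 p.1 := rfl
    rw [this]
    have : condLaw X ν₀ μhat x₀ δ t = (ρ.prod μhat).map fun p => X t p.2 p.1 := rfl
    rw [this]
    exact key_coupling_bound t K hK0 X hXt ρ hρ μ μhat hμ hμhat hμmom hμhatmom hpt
  have hwnn : 0 ≤ W2sq μ μhat := W2sq_nonneg
  have hKeq : K = C ^ 2 * T * t * Real.exp (2 * C * t) := hKdef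
  constructor
  · -- W2 bound
    have hsq : W2 (condLaw X ν₀ μ x₀ δ t) (condLaw X ν₀ μhat x₀ δ t)
        ≤ Real.sqrt (K * W2sq μ μhat) := Real.sqrt_le_sqrt hmain
    rw [Real.sqrt_mul hK0] at hsq
    have hfirst : 0 ≤ 2 * δ * Real.exp (2 * C * t / 2) := by positivity
    have : W2 μ μhat = Real.sqrt (W2sq μ μhat) := rfl
    rw [this]
    calc W2 (condLaw X ν₀ μ x₀ δ t) (condLaw X ν₀ μhat x₀ δ t)
        ≤ Real.sqrt K * Real.sqrt (W2sq μ μhat) := hsq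
      _ ≤ 2 * δ * Real.exp (2 * C * t / 2) +
          Real.sqrt (C ^ 2 * T * t * Real.exp (2 * C * t)) * Real.sqrt (W2sq μ μhat) := by
          rw [← hKeq]; linarith
  · -- W2sq bound
    have h1 : K * W2sq μ μhat ≤ 2 * K * W2sq μ μhat := by nlinarith
    have h2 : 0 ≤ 8 * δ ^ 2 * Real.exp (2 * C * t) := by positivity
    calc W2sq (condLaw X ν₀ μ x₀ δ t) (condLaw X ν₀ μhat x₀ δ t)
        ≤ K * W2sq μ μhat := hmain
      _ ≤ 8 * δ ^ 2 * Real.exp (2 * C * t) +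
          2 * (C ^ 2 * T) * t * Real.exp (2 * C * t) * W2sq μ μhat := by
          have : 2 * (C ^ 2 * T) * t * Real.exp (2 * C * t) * W2sq μ μhat
              = 2 * K * W2sq μ μhat := by rw [hKeq]; ring
          rw [this]; linarith
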